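/- Fix 0 < α < β, c > 0, and an integer ℓ ≥ 1. Let (X_m)_{m∈ℤ}, the illuminated sites, and Θ_k be as in the long-range model. For N ∈ ℕ let Ẽ_N be the event that there exists j ∈ ℤ with |j| ≤ ⌈c N^{1+β}⌉ such that Θ_k = 1 for every k ∈ ℤ with |k − j| ≤ ℓN. Then there exists a constant C = C(α, β, c, ℓ) ≥ 1 such that ℙ(Ẽ_N) ≥ 1 − C exp(−C^{−1} N^{β−α}) for every N ∈ ℕ; in particular, ℙ(liminf_{N→∞} Ẽ_N) = 1, i.e. with probability one all but finitely many of the events Ẽ_N occur. -/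

import Mathlib

open MeasureTheory ProbabilityTheory Filter Topology
open scoped ENNReal

/-- The normalizing constant `Z_α = Σ_{k ≠ 0} |k|^{-(2+α)}` of the heavy-tailed law. -/
noncomputable def Zalpha (α : ℝ) : ℝ :=
  ∑' k : ℤ, if k = 0 then 0 else |(k : ℝ)| ^ (-(2 + α))

/-- A site `k ∈ ℤ` is illuminated (for the configuration `ω`) if some lamp `m`
has brightness `X m ω ≥ |m - k|`. -/
def Illuminated {Ω : Type*} (X : ℤ → Ω → ℤ) (k : ℤ) (ω : Ω) : Prop :=
  ∃ m : ℤ, |m - k| ≤ X m ω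

/-- The field `Θ_k`: equal to `1` on illuminated sites and `2` otherwise. -/
noncomputable def ThetaSite {Ω : Type*} (X : ℤ → Ω → ℤ) (k : ℤ) (ω : Ω) : ℝ :=
  haveI := Classical.propDecidable (Illuminated X k ω)
  if Illuminated X k ω then 1 else 2

/-- The random step function `θ^stripe(x) = Θ_{⌊x⌋}`. -/
noncomputable def thetaStripe {Ω : Type*} (X : ℤ → Ω → ℤ) (x : ℝ) (ω : Ω) : ℝ :=
  ThetaSite X ⌊x⌋ ω

lemma Zalpha_eq (α : ℝ) (hα : 0 < α) :
    Zalpha α = ∑' k : ℤ, |(k : ℝ)| ^ (-(2 + α)) := by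
  unfold Zalpha
  congr 1; funext k
  split_ifs with h
  · subst h
    rw [Int.cast_zero, abs_zero, Real.zero_rpow (by intro hh; nlinarith [hh] : -(2+α) ≠ 0)]
  · rfl

lemma one_le_Zalpha (α : ℝ) (hα : 0 < α) : 1 ≤ Zalpha α := by
  have hsum : Summable fun k : ℤ => |(k : ℝ)| ^ (-(2 + α)) :=
    Real.summable_abs_int_rpow (by linarith)
  rw [Zalpha_eq α hα]
  have := Summable.le_tsum hsum 1 (fun j _ => by positivity)
  simpa using this

lemma summable_exp_neg_rpow' {r δ : ℝ} (hr : 0 < r) (hδ : 0 < δ) :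
    Summable (fun N : ℕ => Real.exp (-(r * (N : ℝ) ^ δ))) := by
  have h1 : Tendsto (fun N : ℕ => ((N : ℝ)) ^ δ) atTop atTop :=
    (tendsto_rpow_atTop hδ).comp tendsto_natCast_atTop_atTop
  have h2 := (isLittleO_exp_neg_mul_rpow_atTop hr (-2 / δ)).comp_tendsto h1
  have h3 : (fun N : ℕ => Real.exp (-(r * (N : ℝ) ^ δ))) =O[atTop]
      fun N : ℕ => (N : ℝ) ^ (-2 : ℝ) := by
    have heq : ∀ N : ℕ, ((N : ℝ) ^ δ) ^ (-2 / δ) = (N : ℝ) ^ (-2 : ℝ) := by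
      intro N
      rw [← Real.rpow_mul (Nat.cast_nonneg N)]
      congr 1; field_simp
    refine (h2.isBigO.congr ?_ ?_) <;> intro N
    · simp [Function.comp, neg_mul]
    · exact heq N
  exact summable_of_isBigO_nat (Real.summable_nat_rpow.mpr (by norm_num : (-2:ℝ) < -1)) h3

/-- **Proposition 6.3 (algebraic scale selection).** Fix `0 < α < β`, `c > 0`, `ℓ ≥ 1`.
Let `Ẽ_N` be the event that some `j ∈ ℤ` with `|j| ≤ ⌈c N^{1+β}⌉` is the center of a run of
illuminated sites of radius `ℓN`. Then there is a constant `C ≥ 1` with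
`ℙ(Ẽ_N) ≥ 1 - C exp(-C⁻¹ N^{β-α})` for every `N`; in particular almost surely all but
finitely many of the events `Ẽ_N` occur. -/
theorem algebraic_scale_selection {Ω : Type*} [MeasurableSpace Ω] (μ : Measure Ω)
    [IsProbabilityMeasure μ]
    (α β c : ℝ) (hα0 : 0 < α) (hαβ : α < β) (hc : 0 < c) (ℓ : ℕ) (hℓ : 1 ≤ ℓ)
    (X : ℤ → Ω → ℤ) (hXm : ∀ m, Measurable (X m))
    (hindep : iIndepFun X μ)
    (hident : ∀ m : ℤ, IdentDistrib (X m) (X 0) μ μ)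
    (hlaw : ∀ k : ℤ, k ≠ 0 →
      μ {ω | X 0 ω = k} = ENNReal.ofReal ((Zalpha α)⁻¹ * |(k : ℝ)| ^ (-(2 + α))))
    (hlaw0 : μ {ω | X 0 ω = 0} = 0) :
    ∃ C : ℝ, 1 ≤ C ∧
      (∀ N : ℕ,
        ENNReal.ofReal (1 - C * Real.exp (-(C⁻¹ * (N : ℝ) ^ (β - α)))) ≤
          μ {ω | ∃ j : ℤ, |j| ≤ ⌈c * (N : ℝ) ^ (1 + β)⌉ ∧
              ∀ k : ℤ, |k - j| ≤ (ℓ : ℤ) * (N : ℤ) → ThetaSite X k ω = 1}) ∧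
      (∀ᵐ ω ∂μ, ∀ᶠ N : ℕ in atTop,
        ∃ j : ℤ, |j| ≤ ⌈c * (N : ℝ) ^ (1 + β)⌉ ∧
          ∀ k : ℤ, |k - j| ≤ (ℓ : ℤ) * (N : ℤ) → ThetaSite X k ω = 1) := by
  classical
  set Z := Zalpha α with hZdef
  have hZ1 : 1 ≤ Z := one_le_Zalpha α hα0
  have hZpos : 0 < Z := lt_of_lt_of_le one_pos hZ1
  have hℓR : (1:ℝ) ≤ (ℓ:ℝ) := by exact_mod_cast hℓ
  have hℓpos : (0:ℝ) < (ℓ:ℝ) := by linarith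
  set q : ℝ := Z⁻¹ * (2:ℝ) ^ (-(2+α)) * (ℓ:ℝ) ^ (-(1+α)) with hqdef
  have hq : 0 < q := by positivity
  set r : ℝ := min (q*c) c with hrdef
  have hr : 0 < r := lt_min (by positivity) hc
  set C : ℝ := max 1 r⁻¹ with hCdef
  have hC1 : (1:ℝ) ≤ C := le_max_left _ _
  have hCpos : 0 < C := lt_of_lt_of_le one_pos hC1
  have hCr : C⁻¹ ≤ r := by
    rw [← inv_inv r]
    exact inv_anti₀ (by positivity) (le_max_right _ _)
  set P : ℕ → Ω → Prop := fun N ω => ∃ j : ℤ, |j| ≤ ⌈c * (N : ℝ) ^ (1 + β)⌉ ∧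
      ∀ k : ℤ, |k - j| ≤ (ℓ : ℤ) * (N : ℤ) → ThetaSite X k ω = 1 with hPdef
  have key : ∀ N : ℕ, 1 ≤ N →
      μ {ω | ¬ P N ω} ≤ ENNReal.ofReal (Real.exp (-(r * (N:ℝ) ^ (β - α)))) ∧
      ENNReal.ofReal (1 - C * Real.exp (-(C⁻¹ * (N : ℝ) ^ (β - α)))) ≤ μ {ω | P N ω} := by
    intro N hN1
    have hNR : (1:ℝ) ≤ (N:ℝ) := by exact_mod_cast hN1
    have hNpos : (0:ℝ) < (N:ℝ) := by linarith
    set L : ℤ := (ℓ:ℤ) * (N:ℤ) with hLdef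
    have hℓZ : (1:ℤ) ≤ (ℓ:ℤ) := by exact_mod_cast hℓ
    have hNZ : (1:ℤ) ≤ (N:ℤ) := by exact_mod_cast hN1
    have hL1 : 1 ≤ L := by nlinarith
    have hLR : ((L:ℤ):ℝ) = (ℓ:ℝ) * (N:ℝ) := by rw [hLdef]; push_cast; ring
    have hLpos : (0:ℝ) < ((L:ℤ):ℝ) := by rw [hLR]; positivity
    set M : ℤ := ⌈c * (N:ℝ) ^ (1+β)⌉ with hMdef
    have hM0 : 0 ≤ M := Int.ceil_nonneg (by positivity)
    set J : Finset ℤ := Finset.Icc (-M) M with hJdef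
    set S : Finset ℤ := Finset.Icc L (2*L) with hSdef
    have hSmeas : MeasurableSet (↑S : Set ℤ) := S.finite_toSet.measurableSet
    set A : ℤ → Set Ω := fun j => X j ⁻¹' (↑S : Set ℤ) with hAdef
    have hAmeas : ∀ j, MeasurableSet (A j) := fun j => (hXm j) hSmeas
    set p0 : ℝ := q * (N:ℝ) ^ (-(1+α)) with hp0def
    have hp0pos : 0 < p0 := by positivity
    have hcardS : ((S.card : ℕ) : ℝ) = ((L:ℤ):ℝ) + 1 := by
      have h1 : S.card = (L+1).toNat := by
        rw [hSdef, Int.card_Icc]; congr 1; ring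
      have h2 : ((S.card : ℕ) : ℤ) = L + 1 := by
        rw [h1, Int.toNat_of_nonneg (by omega)]
      exact_mod_cast congrArg (Int.cast : ℤ → ℝ) h2
    -- single site bound
    have hid : p0 = ((L:ℤ):ℝ) * (Z⁻¹ * (((2*L:ℤ)):ℝ) ^ (-(2+α))) := by
      have hLe : (((2*L:ℤ)):ℝ) = 2 * ((ℓ:ℝ) * (N:ℝ)) := by rw [hLdef]; push_cast; ring
      rw [hLe, hLR]
      rw [Real.mul_rpow (by norm_num) (by positivity),
          Real.mul_rpow (by positivity) (by positivity)]
      have hℓid : (ℓ:ℝ) ^ (-(1+α)) = (ℓ:ℝ) * (ℓ:ℝ) ^ (-(2+α)) := by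
        rw [show -(1+α) = 1 + -(2+α) by ring, Real.rpow_add hℓpos, Real.rpow_one]
      have hNid : (N:ℝ) ^ (-(1+α)) = (N:ℝ) * (N:ℝ) ^ (-(2+α)) := by
        rw [show -(1+α) = 1 + -(2+α) by ring, Real.rpow_add hNpos, Real.rpow_one]
      rw [hp0def, hqdef, hℓid, hNid]; ring
    have hsingle : ∀ j : ℤ, ENNReal.ofReal p0 ≤ μ (A j) := by
      intro j
      have hmap : μ (A j) = μ (X 0 ⁻¹' (↑S : Set ℤ)) := by
        calc μ (A j) = Measure.map (X j) μ ↑S := (Measure.map_apply (hXm j) hSmeas).symm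
          _ = Measure.map (X 0) μ ↑S := by rw [(hident j).map_eq]
          _ = μ (X 0 ⁻¹' ↑S) := Measure.map_apply (hXm 0) hSmeas
      have hdecomp : X 0 ⁻¹' (↑S : Set ℤ) = ⋃ k ∈ S, {ω | X 0 ω = k} := by
        ext ω
        simp only [Set.mem_preimage, Finset.mem_coe, Set.mem_iUnion, Set.mem_setOf_eq]
        constructor
        · intro h; exact ⟨X 0 ω, h, rfl⟩
        · rintro ⟨k, hk, hke⟩; rwa [hke]
      have hmeas' : ∀ k ∈ S, MeasurableSet {ω | X 0 ω = k} := fun k _ =>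
        (hXm 0) (measurableSet_singleton k)
      have hdisj : (↑S : Set ℤ).PairwiseDisjoint (fun k => {ω | X 0 ω = k}) := by
        intro a _ b _ hab
        rw [Function.onFun, Set.disjoint_left]
        intro ω ha hb
        exact hab (ha.symm.trans hb)
      have hsum : μ (X 0 ⁻¹' (↑S : Set ℤ)) = ∑ k ∈ S, μ {ω | X 0 ω = k} := by
        rw [hdecomp]; exact measure_biUnion_finset hdisj hmeas'
      have hterm : ∀ k ∈ S, ENNReal.ofReal (Z⁻¹ * (((2*L:ℤ)):ℝ) ^ (-(2+α)))
          ≤ μ {ω | X 0 ω = k} := by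
        intro k hk
        rw [hSdef, Finset.mem_Icc] at hk
        have hk1 : (1:ℤ) ≤ k := le_trans hL1 hk.1
        have hkne : k ≠ 0 := by omega
        rw [hlaw k hkne]
        apply ENNReal.ofReal_le_ofReal
        apply mul_le_mul_of_nonneg_left _ (by positivity)
        have hkpos : (0:ℝ) < (k:ℝ) := by exact_mod_cast hk1
        rw [abs_of_pos hkpos]
        exact Real.rpow_le_rpow_of_nonpos hkpos (by exact_mod_cast hk.2) (by linarith)
      calc ENNReal.ofReal p0
          ≤ ENNReal.ofReal ((S.card : ℝ) * (Z⁻¹ * (((2*L:ℤ)):ℝ) ^ (-(2+α)))) := by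
            apply ENNReal.ofReal_le_ofReal
            rw [hid, hcardS]
            apply mul_le_mul_of_nonneg_right (by linarith) (by positivity)
        _ = (S.card : ℝ≥0∞) * ENNReal.ofReal (Z⁻¹ * (((2*L:ℤ)):ℝ) ^ (-(2+α))) := by
            rw [ENNReal.ofReal_mul (by positivity), ENNReal.ofReal_natCast]
        _ ≤ ∑ k ∈ S, μ {ω | X 0 ω = k} := by
            rw [← nsmul_eq_mul]
            exact Finset.card_nsmul_le_sum S _ _ hterm
        _ = μ (A j) := by rw [hmap, hsum]
    set p : ℝ := min p0 1 with hpdef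
    have hp0' : 0 ≤ p := le_min hp0pos.le zero_le_one
    have hp1 : p ≤ 1 := min_le_right _ _
    have hpA : ∀ j, ENNReal.ofReal p ≤ μ (A j) := fun j =>
      le_trans (ENNReal.ofReal_le_ofReal (min_le_left _ _)) (hsingle j)
    have hprod : μ (⋂ j ∈ J, (A j)ᶜ) = ∏ j ∈ J, μ ((A j)ᶜ) := by
      refine hindep.meas_biInter (fun j _ => ?_)
      exact ⟨(↑S)ᶜ, MeasurableSpace.measurableSet_top, rfl⟩
    have hcomplbd : ∀ j, μ ((A j)ᶜ) ≤ ENNReal.ofReal (1 - p) := by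
      intro j
      rw [prob_compl_eq_one_sub (hAmeas j)]
      calc 1 - μ (A j) ≤ 1 - ENNReal.ofReal p := tsub_le_tsub_left (hpA j) 1
        _ = ENNReal.ofReal (1 - p) := by
            rw [ENNReal.ofReal_sub 1 hp0', ENNReal.ofReal_one]
    have hcardJ : c * (N:ℝ) ^ (1+β) ≤ (J.card : ℝ) := by
      have h1 : J.card = (2*M+1).toNat := by
        rw [hJdef, Int.card_Icc]; congr 1; ring
      have h2 : ((J.card : ℕ) : ℤ) = 2*M+1 := by
        rw [h1, Int.toNat_of_nonneg (by omega)]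
      have h3 : ((J.card : ℕ) : ℝ) = 2*(M:ℝ)+1 := by exact_mod_cast h2
      have hceil : c * (N:ℝ) ^ (1+β) ≤ (M:ℝ) := Int.le_ceil _
      have hM0R : (0:ℝ) ≤ (M:ℝ) := by exact_mod_cast hM0
      linarith
    have hkey : r * (N:ℝ) ^ (β-α) ≤ p * (J.card : ℝ) := by
      rcases le_total p0 1 with h | h
      · have hpe : p = p0 := min_eq_left h
        have hexp : (N:ℝ) ^ (β-α) = (N:ℝ) ^ (-(1+α)) * (N:ℝ) ^ (1+β) := by
          rw [← Real.rpow_add hNpos]; congr 1; ring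
        calc r * (N:ℝ) ^ (β-α) ≤ (q*c) * (N:ℝ) ^ (β-α) :=
              mul_le_mul_of_nonneg_right (min_le_left _ _) (by positivity)
          _ = p0 * (c * (N:ℝ) ^ (1+β)) := by rw [hexp, hp0def]; ring
          _ ≤ p * (J.card : ℝ) := by
              rw [hpe]; exact mul_le_mul_of_nonneg_left hcardJ hp0pos.le
      · have hpe : p = 1 := min_eq_right h
        have hmono : (N:ℝ) ^ (β-α) ≤ (N:ℝ) ^ (1+β) :=
          Real.rpow_le_rpow_of_exponent_le hNR (by linarith)
        calc r * (N:ℝ) ^ (β-α) ≤ c * (N:ℝ) ^ (1+β) :=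
              mul_le_mul (min_le_right _ _) hmono (by positivity) hc.le
          _ ≤ (J.card : ℝ) := hcardJ
          _ = p * (J.card : ℝ) := by rw [hpe, one_mul]
    have hInter : μ (⋂ j ∈ J, (A j)ᶜ) ≤ ENNReal.ofReal (Real.exp (-(r * (N:ℝ) ^ (β-α)))) := by
      rw [hprod]
      calc ∏ j ∈ J, μ ((A j)ᶜ) ≤ ∏ _j ∈ J, ENNReal.ofReal (1-p) :=
            Finset.prod_le_prod' (fun j _ => hcomplbd j)
        _ = ENNReal.ofReal (1-p) ^ J.card := Finset.prod_const _
        _ = ENNReal.ofReal ((1-p) ^ J.card) := (ENNReal.ofReal_pow (by linarith) _).symm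
        _ ≤ ENNReal.ofReal (Real.exp (-(r * (N:ℝ) ^ (β-α)))) := by
            apply ENNReal.ofReal_le_ofReal
            have h1 : (1-p) ^ J.card ≤ Real.exp (-p) ^ J.card :=
              pow_le_pow_left₀ (by linarith) (by linarith [Real.add_one_le_exp (-p)]) _
            have h2 : Real.exp (-p) ^ J.card = Real.exp (-(p * (J.card:ℝ))) := by
              rw [← Real.exp_nat_mul]; congr 1; ring
            calc (1-p) ^ J.card ≤ Real.exp (-(p * (J.card:ℝ))) := by rw [← h2]; exact h1
              _ ≤ Real.exp (-(r * (N:ℝ) ^ (β-α))) := by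
                  apply Real.exp_le_exp.mpr; linarith
    have hsubset : (⋃ j ∈ J, A j) ⊆ {ω | P N ω} := by
      intro ω hω
      simp only [Set.mem_iUnion] at hω
      obtain ⟨j, hjJ, hωA⟩ := hω
      rw [hJdef, Finset.mem_Icc] at hjJ
      have hjM : |j| ≤ M := abs_le.mpr ⟨by linarith [hjJ.1], hjJ.2⟩
      have hXS : L ≤ X j ω ∧ X j ω ≤ 2*L := by
        have : X j ω ∈ S := hωA
        rwa [hSdef, Finset.mem_Icc] at this
      refine ⟨j, hjM, fun k hk => ?_⟩
      have hill : Illuminated X k ω := ⟨j, by rw [abs_sub_comm]; exact le_trans hk hXS.1⟩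
      unfold ThetaSite
      exact if_pos hill
    have hUmeas : MeasurableSet (⋃ j ∈ J, A j) := J.measurableSet_biUnion (fun j _ => hAmeas j)
    have hUc : (⋃ j ∈ J, A j)ᶜ = ⋂ j ∈ J, (A j)ᶜ := by
      simp [Set.compl_iUnion]
    constructor
    · have hsub2 : {ω | ¬ P N ω} ⊆ ⋂ j ∈ J, (A j)ᶜ := by
        rw [← hUc]
        intro ω hω hmem
        exact hω (hsubset hmem)
      exact le_trans (measure_mono hsub2) hInter
    · have hE : Real.exp (-(r * (N:ℝ) ^ (β-α))) ≤ C * Real.exp (-(C⁻¹ * (N:ℝ) ^ (β-α))) := by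
        have h1 : Real.exp (-(r * (N:ℝ) ^ (β-α))) ≤ Real.exp (-(C⁻¹ * (N:ℝ) ^ (β-α))) := by
          apply Real.exp_le_exp.mpr
          have : C⁻¹ * (N:ℝ) ^ (β-α) ≤ r * (N:ℝ) ^ (β-α) :=
            mul_le_mul_of_nonneg_right hCr (by positivity)
          linarith
        calc Real.exp (-(r * (N:ℝ) ^ (β-α))) ≤ Real.exp (-(C⁻¹ * (N:ℝ) ^ (β-α))) := h1
          _ ≤ C * Real.exp (-(C⁻¹ * (N:ℝ) ^ (β-α))) :=
            le_mul_of_one_le_left (Real.exp_nonneg _) hC1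
      have h5 : ENNReal.ofReal (1 - C * Real.exp (-(C⁻¹ * (N:ℝ) ^ (β-α)))) ≤
          1 - μ (⋂ j ∈ J, (A j)ᶜ) := by
        calc ENNReal.ofReal (1 - C * Real.exp (-(C⁻¹ * (N:ℝ) ^ (β-α))))
            = 1 - ENNReal.ofReal (C * Real.exp (-(C⁻¹ * (N:ℝ) ^ (β-α)))) := by
              rw [ENNReal.ofReal_sub 1 (by positivity), ENNReal.ofReal_one]
          _ ≤ 1 - μ (⋂ j ∈ J, (A j)ᶜ) :=
              tsub_le_tsub_left (le_trans hInter (ENNReal.ofReal_le_ofReal hE)) 1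
      have h6 : 1 - μ (⋂ j ∈ J, (A j)ᶜ) ≤ μ {ω | P N ω} := by
        rw [← hUc, prob_compl_eq_one_sub hUmeas,
            ENNReal.sub_sub_cancel ENNReal.one_ne_top prob_le_one]
        exact measure_mono hsubset
      exact le_trans h5 h6
  refine ⟨C, hC1, ?_, ?_⟩
  · intro N
    rcases Nat.eq_zero_or_pos N with h0 | h1
    · subst h0
      have hz : ((0:ℕ):ℝ) ^ (β - α) = 0 := by
        rw [Nat.cast_zero]; exact Real.zero_rpow (by linarith)
      rw [hz]
      simp only [mul_zero, neg_zero, Real.exp_zero, mul_one]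
      rw [ENNReal.ofReal_eq_zero.mpr (by linarith)]
      exact zero_le
    · exact (key N h1).2
  · have hbd : ∀ N : ℕ, μ {ω | ¬ P N ω} ≤
        ENNReal.ofReal (Real.exp (-(r * (N:ℝ) ^ (β-α)))) := by
      intro N
      rcases Nat.eq_zero_or_pos N with h0 | h1
      · subst h0
        have hz : ((0:ℕ):ℝ) ^ (β - α) = 0 := by
          rw [Nat.cast_zero]; exact Real.zero_rpow (by linarith)
        rw [hz]
        simp only [mul_zero, neg_zero, Real.exp_zero, ENNReal.ofReal_one]
        exact prob_le_one
      · exact (key N h1).1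
    have hsummable := summable_exp_neg_rpow' hr (by linarith : (0:ℝ) < β - α)
    have hsum : ∑' N : ℕ, μ {ω | ¬ P N ω} ≠ ∞ := by
      apply ne_top_of_le_ne_top _ (ENNReal.tsum_le_tsum hbd)
      rw [← ENNReal.ofReal_tsum_of_nonneg (fun _ => (Real.exp_pos _).le) hsummable]
      exact ENNReal.ofReal_ne_top
    have h0 := measure_setOf_frequently_eq_zero (p := fun N ω => ¬ P N ω) hsum
    have hae : ∀ᵐ ω ∂μ, ¬ ∃ᶠ N in atTop, ¬ P N ω := by
      rw [ae_iff]
      have hseteq : {a : Ω | ¬¬∃ᶠ N in atTop, ¬ P N a} = {a : Ω | ∃ᶠ N in atTop, ¬ P N a} := by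
        simp only [not_not]
      rw [hseteq]
      exact h0
    filter_upwards [hae] with ω hω
    simpa [not_frequently, not_not] using hω
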